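/- Let s be a bijection of ℕ preserving each set {1,...,2^i}. In the graph G_s (vertex set ℤ, path edges {n,n+1}, chord edges {2n,−2s(n)} for n ≥ 1), the doubly infinite path ..., −2, −1, 0, 1, 2, ... is the unique two-way infinite induced-spanning path with the property that no two consecutive vertices on it both have degree 3 in G_s. -/

import Mathlib

/-- The graph `G_s` on `ℤ`: the doubly infinite path together with a chord from
`2n` to `-2s(n)` for every `n ≥ 1`. -/
def Gs (s : ℕ → ℕ) : SimpleGraph ℤ :=
  SimpleGraph.fromRel (fun m m' =>
    m' = m + 1 ∨ ∃ n : ℕ, 1 ≤ n ∧ m = 2 * (n : ℤ) ∧ m' = -(2 * (s n : ℤ)))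

/-- `s` is a bijection of `ℕ` mapping `{1,…,2^i}` onto itself for every `i`. -/
def SegPreserving (s : ℕ → ℕ) : Prop :=
  Function.Bijective s ∧
    ∀ i : ℕ, 1 ≤ i → s '' {n | 1 ≤ n ∧ n ≤ 2 ^ i} = {n | 1 ≤ n ∧ n ≤ 2 ^ i}

/-- A vertex of `G_s` has degree `3`. -/
def DegThree (s : ℕ → ℕ) (v : ℤ) : Prop := ((Gs s).neighborSet v).ncard = 3

lemma s_pos {s : ℕ → ℕ} (hs : SegPreserving s) {n : ℕ} (hn : 1 ≤ n) : 1 ≤ s n := by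
  have h := hs.2 n hn
  have hmem : s n ∈ s '' {m | 1 ≤ m ∧ m ≤ 2 ^ n} :=
    ⟨n, ⟨hn, Nat.le_of_lt (Nat.lt_two_pow_self (n := n))⟩, rfl⟩
  rw [h] at hmem
  exact hmem.1

lemma s_zero {s : ℕ → ℕ} (hs : SegPreserving s) : s 0 = 0 := by
  by_contra h
  have h1 : 1 ≤ s 0 := Nat.one_le_iff_ne_zero.mpr h
  have hmem : s 0 ∈ {m | 1 ≤ m ∧ m ≤ 2 ^ (s 0)} :=
    ⟨h1, Nat.le_of_lt (Nat.lt_two_pow_self (n := s 0))⟩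
  rw [← hs.2 (s 0) h1] at hmem
  obtain ⟨m, hm, hme⟩ := hmem
  have h0 := hs.1.1 hme
  have := hm.1
  omega

lemma nbhd_pos {s : ℕ → ℕ} (hs : SegPreserving s) {n : ℕ} (hn : 1 ≤ n) :
    (Gs s).neighborSet (2 * (n : ℤ)) =
      {2 * (n : ℤ) - 1, 2 * (n : ℤ) + 1, -(2 * (s n : ℤ))} := by
  have hsn : 1 ≤ s n := s_pos hs hn
  ext w
  simp only [SimpleGraph.mem_neighborSet, Gs, SimpleGraph.fromRel_adj,
    Set.mem_insert_iff, Set.mem_singleton_iff]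
  constructor
  · rintro ⟨hne, h | h⟩
    · rcases h with h | ⟨m, hm, he, hw⟩
      · right; left; omega
      · have hmn : m = n := by
          have : (m : ℤ) = (n : ℤ) := by omega
          exact_mod_cast this
        subst hmn
        right; right; exact hw
    · rcases h with h | ⟨m, hm, hw, he⟩
      · left; omega
      · exfalso
        have h1 : 1 ≤ s m := s_pos hs hm
        omega
  · rintro (h | h | h) <;> subst h
    · exact ⟨by omega, Or.inr (Or.inl (by omega))⟩
    · exact ⟨by omega, Or.inl (Or.inl rfl)⟩
    · exact ⟨by omega, Or.inl (Or.inr ⟨n, hn, rfl, rfl⟩)⟩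

lemma nbhd_neg {s : ℕ → ℕ} (hs : SegPreserving s) {k : ℕ} (hk : 1 ≤ k) :
    ∃ n : ℕ, 1 ≤ n ∧
      (Gs s).neighborSet (-(2 * (k : ℤ))) =
        {-(2 * (k : ℤ)) - 1, -(2 * (k : ℤ)) + 1, 2 * (n : ℤ)} := by
  obtain ⟨n, hn⟩ := hs.1.2 k
  have hn1 : 1 ≤ n := by
    rcases Nat.eq_zero_or_pos n with h0 | h0
    · exfalso; rw [h0, s_zero hs] at hn; omega
    · exact h0
  refine ⟨n, hn1, ?_⟩
  ext w
  simp only [SimpleGraph.mem_neighborSet, Gs, SimpleGraph.fromRel_adj,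
    Set.mem_insert_iff, Set.mem_singleton_iff]
  constructor
  · rintro ⟨hne, h | h⟩
    · rcases h with h | ⟨m, hm, he, hw⟩
      · right; left; omega
      · exfalso; omega
    · rcases h with h | ⟨m, hm, hw, he⟩
      · left; omega
      · have hsm : s m = k := by
          have : (s m : ℤ) = (k : ℤ) := by omega
          exact_mod_cast this
        have hmn : m = n := hs.1.1 (by rw [hsm, hn])
        subst hmn
        right; right; exact hw
  · rintro (h | h | h) <;> subst h
    · exact ⟨by omega, Or.inr (Or.inl (by omega))⟩
    · exact ⟨by omega, Or.inl (Or.inl (by omega))⟩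
    · refine ⟨by omega, Or.inr (Or.inr ⟨n, hn1, rfl, by rw [hn]⟩)⟩

lemma deg_pos {s : ℕ → ℕ} (hs : SegPreserving s) {n : ℕ} (hn : 1 ≤ n) :
    DegThree s (2 * (n : ℤ)) := by
  have hsn : 1 ≤ s n := s_pos hs hn
  rw [DegThree, nbhd_pos hs hn, Set.ncard_eq_three]
  exact ⟨_, _, _, by omega, by omega, by omega, rfl⟩

lemma deg_neg {s : ℕ → ℕ} (hs : SegPreserving s) {k : ℕ} (hk : 1 ≤ k) :
    DegThree s (-(2 * (k : ℤ))) := by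
  obtain ⟨n, hn1, hset⟩ := nbhd_neg hs hk
  rw [DegThree, hset, Set.ncard_eq_three]
  exact ⟨_, _, _, by omega, by omega, by omega, rfl⟩

/-- The standard doubly infinite path `…,-1,0,1,…` is the unique two-way
infinite spanning path of `G_s` (given by an enumeration `p : ℤ ≃ ℤ` of the
vertices with consecutive vertices adjacent) on which no two consecutive
vertices both have degree `3`; uniqueness holds up to translation and
reflection of the parametrisation. -/
theorem stmt_12 (s : ℕ → ℕ) (hs : SegPreserving s) (p : ℤ ≃ ℤ)
    (hadj : ∀ k : ℤ, (Gs s).Adj (p k) (p (k + 1)))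
    (hdeg : ∀ k : ℤ, ¬ (DegThree s (p k) ∧ DegThree s (p (k + 1)))) :
    ∃ c : ℤ, (∀ k : ℤ, p k = k + c) ∨ (∀ k : ℤ, p k = c - k) := by
  have step : ∀ k : ℤ, p (k + 1) = p k + 1 ∨ p (k + 1) = p k - 1 := by
    intro k
    have ha := hadj k
    simp only [Gs, SimpleGraph.fromRel_adj] at ha
    obtain ⟨hne, h | h⟩ := ha
    · rcases h with h | ⟨n, hn, h1, h2⟩
      · left; omega
      · exfalso
        exact hdeg k ⟨h1 ▸ deg_pos hs hn, h2 ▸ deg_neg hs (s_pos hs hn)⟩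
    · rcases h with h | ⟨n, hn, h1, h2⟩
      · right; omega
      · exfalso
        exact hdeg k ⟨h2 ▸ deg_neg hs (s_pos hs hn), h1 ▸ deg_pos hs hn⟩
  have he : p 1 - p 0 = 1 ∨ p 1 - p 0 = -1 := by
    have h0 := step 0
    rw [zero_add] at h0
    omega
  have key : ∀ k : ℤ, p (k + 1) - p k = p 1 - p 0 := by
    intro k
    induction k using Int.induction_on with
    | zero => rw [zero_add]
    | succ i hi =>
        rcases step ((i : ℤ) + 1) with h | h <;> rcases he with e | e <;>
          first
            | omega
            | (exfalso
               have hpp : p ((i : ℤ) + 1 + 1) = p i := by omega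
               have := p.injective hpp
               omega)
    | pred i hi =>
        have hco : (-(i : ℤ) - 1) + 1 = -(i : ℤ) := by ring
        rcases step (-(i : ℤ) - 1) with h | h <;> rw [hco] at h ⊢ <;>
          rcases he with e | e <;>
          first
            | omega
            | (exfalso
               have hpp : p (-(i : ℤ) + 1) = p (-(i : ℤ) - 1) := by omega
               have := p.injective hpp
               omega)
  have gen : ∀ k : ℤ, p k = p 0 + k * (p 1 - p 0) := by
    intro k
    induction k using Int.induction_on with
    | zero => ring
    | succ i hi =>
        have hk := key (i : ℤ)
        have hr : ((i : ℤ) + 1) * (p 1 - p 0) = (i : ℤ) * (p 1 - p 0) + (p 1 - p 0) := by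
          ring
        linarith
    | pred i hi =>
        have hk := key (-(i : ℤ) - 1)
        have hco : (-(i : ℤ) - 1) + 1 = -(i : ℤ) := by ring
        rw [hco] at hk
        have hr : (-(i : ℤ) - 1) * (p 1 - p 0) = (-(i : ℤ)) * (p 1 - p 0) - (p 1 - p 0) := by
          ring
        linarith
  refine ⟨p 0, ?_⟩
  rcases he with e | e
  · left; intro k; have := gen k; rw [e] at this; omega
  · right; intro k; have := gen k; rw [e] at this; omega
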